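/- Fix ε > 0 and c ∈ (0, 1/√2). Let v ∈ ℝ^n be a fixed vector and R ∈ {0,1}^n be uniform on the slice {0,1}^n_{⌊n/2⌋}. Then for all sufficiently small c > 0 and sufficiently large n, sup_{v ∈ ℝ^n} P[ ‖R − v‖_2 ≤ c√n ] ≤ binom(n, ⌊n/2⌋)^{-1} · binom(n, ⌊2c²n⌋) ≤ (1/2 + ε)^n. -/

import Mathlib

open Finset
open scoped Classical

open scoped symmDiff

private lemma aux_linear_le_pow (q : ℝ) (hq : 1 < q) :
    ∃ n₀ : ℕ, ∀ n, n₀ ≤ n → ((n : ℝ) + 1) ≤ q ^ n := by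
  have hq0 : (0:ℝ) ≤ q := by linarith
  set r := Real.sqrt q with hr
  have hr1 : 1 < r := by
    rw [hr, show (1:ℝ) = Real.sqrt 1 by simp]
    exact Real.sqrt_lt_sqrt (by norm_num) hq
  set d := r - 1 with hd
  have hd0 : 0 < d := by simp only [hd]; linarith
  refine ⟨⌈2 / d ^ 2⌉₊ + 1, fun n hn => ?_⟩
  have hn1 : 1 ≤ n := le_trans (Nat.le_add_left 1 _) hn
  have hnd : 2 / d ^ 2 ≤ (n : ℝ) := by
    calc 2/d^2 ≤ (⌈2/d^2⌉₊ : ℝ) := Nat.le_ceil _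
    _ ≤ n := by exact_mod_cast Nat.le_of_succ_le hn
  have hnd2 : 2 ≤ (n:ℝ) * d ^ 2 := by
    rw [div_le_iff₀ (by positivity)] at hnd; linarith
  have h1 : 1 + (n:ℝ) * d ≤ r ^ n := by
    have h := one_add_mul_le_pow (by linarith : (-2:ℝ) ≤ d) n
    have : 1 + d = r := by simp [hd]
    rwa [this] at h
  have hq_eq : q ^ n = (r ^ n) ^ 2 := by
    rw [← pow_mul, mul_comm, pow_mul, hr, Real.sq_sqrt hq0]
  rw [hq_eq]
  have h2 : (1 + (n:ℝ) * d) ^ 2 ≤ (r ^ n) ^ 2 := by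
    apply pow_le_pow_left₀ (by positivity) h1
  have hn1' : (1:ℝ) ≤ n := by exact_mod_cast hn1
  have h3 : (n:ℝ) * 2 ≤ (n:ℝ) * ((n:ℝ) * d^2) := by
    apply mul_le_mul_of_nonneg_left hnd2 (by positivity)
  nlinarith [mul_nonneg (Nat.cast_nonneg (α := ℝ) n) hd0.le]

private lemma choose_pow_le (n K : ℕ) :
    ∀ d J : ℕ, (∀ r : ℕ, J ≤ r → r < J + d → K * (r + 1) + r ≤ n) →
      K ^ d * n.choose J ≤ n.choose (J + d) := by
  intro d
  induction d with
  | zero => intro J _; simp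
  | succ d ih =>
    intro J h
    have hd : K ^ d * n.choose J ≤ n.choose (J + d) := ih J (fun r h1 h2 => h r h1 (by omega))
    have hr := h (J + d) (by omega) (by omega)
    have hstep : K * n.choose (J + d) ≤ n.choose (J + d + 1) := by
      have hid := Nat.choose_succ_right_eq n (J + d)
      have hmul : K * n.choose (J + d) * (J + d + 1) ≤ n.choose (J + d + 1) * (J + d + 1) := by
        rw [hid]
        calc K * n.choose (J+d) * (J+d+1) = (K * (J+d+1)) * n.choose (J+d) := by ring
        _ ≤ (n - (J+d)) * n.choose (J+d) := Nat.mul_le_mul_right _ (by omega)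
        _ = n.choose (J+d) * (n - (J+d)) := Nat.mul_comm _ _
      exact Nat.le_of_mul_le_mul_right hmul (by omega)
    calc K ^ (d+1) * n.choose J = K * (K ^ d * n.choose J) := by ring
    _ ≤ K * n.choose (J + d) := Nat.mul_le_mul_left _ hd
    _ ≤ n.choose (J + d + 1) := hstep

private lemma choose_mono_of_le_half (n : ℕ) :
    ∀ J, J ≤ n / 2 → ∀ j, j ≤ J → n.choose j ≤ n.choose J := by
  intro J
  induction J with
  | zero => intro _ j hj; simp [Nat.le_zero.mp hj]
  | succ J ih =>
    intro hJ j hj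
    rcases Nat.eq_or_lt_of_le hj with h | h
    · rw [h]
    · exact le_trans (ih (by omega) j (by omega))
        (Nat.choose_le_succ_of_lt_half_left (by omega))

private lemma choose_mul_pow_le_real (n R : ℕ) (hR : R ≤ n) (t : ℝ) (ht : 0 ≤ t) :
    (n.choose R : ℝ) * t ^ R ≤ (1 + t) ^ n := by
  have h : (t + 1) ^ n = ∑ k ∈ range (n+1), t ^ k * 1 ^ (n - k) * (n.choose k : ℝ) :=
    add_pow t 1 n
  rw [show (1:ℝ) + t = t + 1 by ring, h]
  have hmem : R ∈ range (n + 1) := mem_range.mpr (by omega)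
  have := Finset.single_le_sum (f := fun k => t ^ k * 1 ^ (n - k) * (n.choose k : ℝ))
    (fun i _ => by positivity) hmem
  calc (n.choose R : ℝ) * t ^ R = t ^ R * 1 ^ (n - R) * (n.choose R : ℝ) := by ring
  _ ≤ _ := this

private lemma two_pow_le_mul_choose (n : ℕ) : 2 ^ n ≤ (n + 1) * n.choose (n / 2) := by
  rw [← Nat.sum_range_choose n]
  calc ∑ i ∈ range (n+1), n.choose i ≤ ∑ _i ∈ range (n+1), n.choose (n/2) :=
    Finset.sum_le_sum (fun i _ => Nat.choose_le_middle i n)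
  _ = (n+1) * n.choose (n/2) := by rw [Finset.sum_const, card_range, smul_eq_mul]


private lemma ball_card_le (n : ℕ) (c : ℝ) (_hc : 0 ≤ c) (v : Fin n → ℝ) :
    ((Finset.powersetCard (n/2) (univ : Finset (Fin n))).filter fun s =>
        Real.sqrt (∑ i, ((if i ∈ s then (1:ℝ) else 0) - v i) ^ 2) ≤ c * Real.sqrt n).card
      ≤ 2 ^ (⌊16 * c^2 * (n:ℝ)⌋₊) *
          ∑ j ∈ Finset.range (⌊16/9 * c^2 * (n:ℝ)⌋₊ + 1), n.choose j := by
  set J := ⌊16/9 * c^2 * (n:ℝ)⌋₊ with hJdef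
  set M := ⌊16 * c^2 * (n:ℝ)⌋₊ with hMdef
  set B := ((Finset.powersetCard (n/2) (univ : Finset (Fin n))).filter fun s =>
        Real.sqrt (∑ i, ((if i ∈ s then (1:ℝ) else 0) - v i) ^ 2) ≤ c * Real.sqrt n) with hBdef
  rcases B.eq_empty_or_nonempty with hB | ⟨s₀, hs₀⟩
  · rw [hB]; simp
  -- squared distance bound for members
  have key : ∀ s, s ∈ B → ∑ i, ((if i ∈ s then (1:ℝ) else 0) - v i) ^ 2 ≤ c^2 * n := by
    intro s hs
    have hmem := (Finset.mem_filter.mp hs).2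
    have hS : (0:ℝ) ≤ ∑ i, ((if i ∈ s then (1:ℝ) else 0) - v i) ^ 2 := by positivity
    have h2 := pow_le_pow_left₀ (Real.sqrt_nonneg _) hmem 2
    rwa [Real.sq_sqrt hS, mul_pow, Real.sq_sqrt (Nat.cast_nonneg n)] at h2
  set w : Fin n → ℝ := fun i => ((if i ∈ s₀ then (1:ℝ) else 0) - v i) ^ 2 with hwdef
  set H := (univ : Finset (Fin n)).filter (fun i => (1:ℝ)/16 ≤ w i) with hHdef
  have hHcard : H.card ≤ M := by
    have h1 : H.card • ((1:ℝ)/16) ≤ ∑ i ∈ H, w i :=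
      Finset.card_nsmul_le_sum H w (1/16) (fun i hi => (Finset.mem_filter.mp hi).2)
    have h2 : ∑ i ∈ H, w i ≤ ∑ i, w i :=
      Finset.sum_le_sum_of_subset_of_nonneg (Finset.subset_univ H)
        (fun i _ _ => sq_nonneg _)
    have h3 : ∑ i, w i ≤ c^2 * n := key s₀ hs₀
    rw [nsmul_eq_mul] at h1
    apply Nat.le_floor
    have : (H.card : ℝ) * (1/16) ≤ c^2*n := le_trans h1 (le_trans h2 h3)
    linarith
  -- the injection
  set T := H.powerset ×ˢ ((univ : Finset (Fin n)).powerset.filter fun F => F.card ≤ J) with hTdef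
  have hcard : B.card ≤ T.card := by
    apply Finset.card_le_card_of_injOn (fun s => (s ∆ s₀ ∩ H, s ∆ s₀ \ H))
    · intro s hs
      rw [hTdef, Finset.mem_coe, Finset.mem_product]
      constructor
      · exact Finset.mem_powerset.mpr Finset.inter_subset_right
      · rw [Finset.mem_filter]
        refine ⟨Finset.mem_powerset.mpr (Finset.subset_univ _), ?_⟩
        -- card bound on s ∆ s₀ \ H
        have h916 : ∀ i ∈ s ∆ s₀ \ H,
            (9:ℝ)/16 ≤ ((if i ∈ s then (1:ℝ) else 0) - v i) ^ 2 := by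
          intro i hi
          rw [Finset.mem_sdiff] at hi
          obtain ⟨hiD, hiH⟩ := hi
          have hw : w i < 1/16 := by
            by_contra hcon
            exact hiH (Finset.mem_filter.mpr ⟨Finset.mem_univ i, not_lt.mp hcon⟩)
          rw [Finset.mem_symmDiff] at hiD
          rw [hwdef] at hw
          rcases hiD with ⟨hi1, hi2⟩ | ⟨hi1, hi2⟩
          · simp only [if_pos hi1, if_neg hi2] at hw ⊢
            have hv : v i ≤ 1/4 := by nlinarith
            nlinarith
          · simp only [if_pos hi1, if_neg hi2] at hw ⊢
            have hv : 3/4 ≤ v i := by nlinarith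
            nlinarith
        have h1 : (s ∆ s₀ \ H).card • ((9:ℝ)/16)
            ≤ ∑ i ∈ s ∆ s₀ \ H, ((if i ∈ s then (1:ℝ) else 0) - v i) ^ 2 :=
          Finset.card_nsmul_le_sum _ _ _ h916
        have h2 : ∑ i ∈ s ∆ s₀ \ H, ((if i ∈ s then (1:ℝ) else 0) - v i) ^ 2
            ≤ ∑ i, ((if i ∈ s then (1:ℝ) else 0) - v i) ^ 2 :=
          Finset.sum_le_sum_of_subset_of_nonneg (Finset.subset_univ _)
            (fun i _ _ => sq_nonneg _)
        have h3 := key s hs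
        rw [nsmul_eq_mul] at h1
        apply Nat.le_floor
        have hle : ((s ∆ s₀ \ H).card : ℝ) * (9/16) ≤ c^2*n := le_trans h1 (le_trans h2 h3)
        nlinarith [hle]
    · intro s hs s' hs' heq
      simp only [Prod.mk.injEq] at heq
      have hds : s ∆ s₀ ∩ H ∪ s ∆ s₀ \ H = s ∆ s₀ := by
        ext i; simp only [Finset.mem_union, Finset.mem_inter, Finset.mem_sdiff]; tauto
      have hds' : s' ∆ s₀ ∩ H ∪ s' ∆ s₀ \ H = s' ∆ s₀ := by
        ext i; simp only [Finset.mem_union, Finset.mem_inter, Finset.mem_sdiff]; tauto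
      have : s ∆ s₀ = s' ∆ s₀ := by rw [← hds, ← hds', heq.1, heq.2]
      exact symmDiff_left_injective s₀ this
  refine le_trans hcard ?_
  rw [hTdef, Finset.card_product, Finset.card_powerset]
  have hfil : ((univ : Finset (Fin n)).powerset.filter fun F => F.card ≤ J).card
      ≤ ∑ j ∈ Finset.range (J+1), n.choose j := by
    have hsub : ((univ : Finset (Fin n)).powerset.filter fun F => F.card ≤ J)
        ⊆ (Finset.range (J+1)).biUnion (fun j => Finset.powersetCard j univ) := by
      intro F hF
      rw [Finset.mem_filter] at hF
      rw [Finset.mem_biUnion]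
      exact ⟨F.card, Finset.mem_range.mpr (by omega),
        Finset.mem_powersetCard.mpr ⟨Finset.subset_univ F, rfl⟩⟩
    refine le_trans (Finset.card_le_card hsub) (le_trans Finset.card_biUnion_le ?_)
    apply Finset.sum_le_sum
    intro j _
    rw [Finset.card_powersetCard, Finset.card_univ, Fintype.card_fin]
  exact Nat.mul_le_mul (Nat.pow_le_pow_right (by norm_num) hHcard) hfil

set_option maxHeartbeats 1000000

/-- For `R` uniform on the central slice `{0,1}^n_{⌊n/2⌋}`, for
all sufficiently small `c > 0` and large `n`, uniformly in `v ∈ ℝⁿ`,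
`P[‖R − v‖₂ ≤ c√n] ≤ choose(n,⌊n/2⌋)⁻¹·choose(n,⌊2c²n⌋) ≤ (1/2 + ε)^n`. -/
theorem slice_small_ball_probability
    (ε : ℝ) (hε : 0 < ε) :
    ∃ c₀ : ℝ, 0 < c₀ ∧ ∀ c : ℝ, 0 < c → c ≤ c₀ → ∃ n₀ : ℕ, ∀ n, n₀ ≤ n →
      (∀ v : Fin n → ℝ,
        (((Finset.powersetCard (n/2) (univ : Finset (Fin n))).filter fun s =>
            Real.sqrt (∑ i, ((if i ∈ s then (1:ℝ) else 0) - v i) ^ 2)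
              ≤ c * Real.sqrt n).card : ℝ)
          / ((n.choose (n/2) : ℕ) : ℝ)
          ≤ ((n.choose (n/2) : ℕ) : ℝ)⁻¹ * ((n.choose ⌊2 * c^2 * (n:ℝ)⌋₊ : ℕ) : ℝ)) ∧
      ((n.choose (n/2) : ℕ) : ℝ)⁻¹ * ((n.choose ⌊2 * c^2 * (n:ℝ)⌋₊ : ℕ) : ℝ)
          ≤ (1/2 + ε) ^ n := by
  have hε'0 : 0 < min ε (1/2) := lt_min hε (by norm_num)
  set ε' := min ε (1/2) with hε'def
  have hε'le : ε' ≤ 1/2 := min_le_right _ _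
  have hε'ε : ε' ≤ ε := min_le_left _ _
  set t : ℝ := ε'/2 with htdef
  have ht0 : 0 < t := by positivity
  have ht14 : t ≤ 1/4 := by rw [htdef]; linarith
  set ρ : ℝ := (1/2 + ε'/2)/(1/2 + ε'/4) with hρdef
  have hρ1 : 1 < ρ := by rw [hρdef, lt_div_iff₀ (by linarith)]; linarith
  set σ : ℝ := (1/2 + ε')/(1/2 + ε'/2) with hσdef
  have hσ1 : 1 < σ := by rw [hσdef, lt_div_iff₀ (by linarith)]; linarith
  have h1t : (1:ℝ) < 1/t := by rw [lt_div_iff₀ ht0]; linarith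
  have hlogt : 0 < Real.log (1/t) := Real.log_pos h1t
  have hlogρ : 0 < Real.log ρ := Real.log_pos hρ1
  set cε : ℝ := Real.sqrt (Real.log ρ / (2 * Real.log (1/t))) with hcεdef
  have hcε : 0 < cε := Real.sqrt_pos.mpr (div_pos hlogρ (by linarith))
  refine ⟨min ((1:ℝ)/2^60) cε, lt_min (by norm_num) hcε, fun c hc hcle => ?_⟩
  obtain ⟨n₁, hn₁⟩ := aux_linear_le_pow σ hσ1
  refine ⟨max n₁ (⌈(2:ℝ)^110/c^2⌉₊ + 1), fun n hn => ?_⟩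
  have hc60 : c ≤ 1/2^60 := le_trans hcle (min_le_left _ _)
  have hccε : c ≤ cε := le_trans hcle (min_le_right _ _)
  have hc2small : c^2 ≤ 1/2^120 := by nlinarith
  have hcn : (2:ℝ)^110 ≤ c^2 * n := by
    have h2 : ((⌈(2:ℝ)^110/c^2⌉₊ : ℕ):ℝ) ≤ (n:ℝ) := by
      have h := le_trans (le_max_right n₁ (⌈(2:ℝ)^110/c^2⌉₊ + 1)) hn
      exact_mod_cast le_trans (Nat.le_succ _) h
    have h3 : (2:ℝ)^110 / c^2 ≤ (n:ℝ) := le_trans (Nat.le_ceil _) h2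
    rw [div_le_iff₀ (by positivity)] at h3
    linarith
  have hcc : c^2*(n:ℝ) ≤ (1/2^120)*(n:ℝ) :=
    mul_le_mul_of_nonneg_right hc2small (Nat.cast_nonneg n)
  have hn0 : (0:ℝ) ≤ (n:ℝ) := Nat.cast_nonneg n
  set R := ⌊2*c^2*(n:ℝ)⌋₊ with hRdef
  set J := ⌊16/9*c^2*(n:ℝ)⌋₊ with hJdef
  set M := ⌊16*c^2*(n:ℝ)⌋₊ with hMdef
  have hc2n : (0:ℝ) ≤ c^2*(n:ℝ) := by positivity
  have hJr : (J:ℝ) ≤ 16/9*c^2*(n:ℝ) := Nat.floor_le (by positivity)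
  have hMr : (M:ℝ) ≤ 16*c^2*(n:ℝ) := Nat.floor_le (by positivity)
  have hRr : (R:ℝ) ≤ 2*c^2*(n:ℝ) := Nat.floor_le (by positivity)
  have hRlow : 2*c^2*(n:ℝ) - 1 ≤ (R:ℝ) := by
    have := Nat.lt_floor_add_one (2*c^2*(n:ℝ)); rw [← hRdef] at this; linarith
  have hJR : J ≤ R := Nat.floor_mono (by linarith)
  have hRn : R ≤ n := by
    have : (R:ℝ) ≤ (n:ℝ) := by linarith
    exact_mod_cast this
  have hCpos : 0 < n.choose (n/2) := Nat.choose_pos (Nat.div_le_self n 2)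
  have hCposR : (0:ℝ) < ((n.choose (n/2) : ℕ) : ℝ) := by exact_mod_cast hCpos
  constructor
  · intro v
    have hnat : ((Finset.powersetCard (n/2) (univ : Finset (Fin n))).filter fun s =>
        Real.sqrt (∑ i, ((if i ∈ s then (1:ℝ) else 0) - v i) ^ 2)
          ≤ c * Real.sqrt n).card ≤ n.choose R := by
      refine le_trans (ball_card_le n c hc.le v) ?_
      have hJhalf : J ≤ n/2 := by
        have h2J : ((2*J:ℕ):ℝ) ≤ (n:ℝ) := by push_cast; linarith
        have : 2*J ≤ n := by exact_mod_cast h2J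
        omega
      have hsum : ∑ j ∈ Finset.range (J+1), n.choose j ≤ (J+1) * n.choose J := by
        calc ∑ j ∈ Finset.range (J+1), n.choose j
            ≤ ∑ _j ∈ Finset.range (J+1), n.choose J :=
          Finset.sum_le_sum (fun j hj => choose_mono_of_le_half n J hJhalf j (by
            have := Finset.mem_range.mp hj; omega))
        _ = (J+1) * n.choose J := by rw [Finset.sum_const, Finset.card_range, smul_eq_mul]
      have hJ2 : J + 1 ≤ 2^J := Nat.lt_two_pow_self
      have hMJ : M + J ≤ 100 * (R - J) := by
        have hr : (M:ℝ) + 101*(J:ℝ) + 100 ≤ 100*(R:ℝ) := by linarith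
        have : M + 101*J + 100 ≤ 100*R := by exact_mod_cast hr
        omega
      have hKstep : ∀ r : ℕ, J ≤ r → r < J + (R - J) → 2^100 * (r+1) + r ≤ n := by
        intro r h1 h2
        have hrR : r + 1 ≤ R := by omega
        have hrRr : ((r:ℝ)+1) ≤ (R:ℝ) := by exact_mod_cast hrR
        have hreal : ((2^100 * (r+1) + r : ℕ) : ℝ) ≤ (n:ℝ) := by
          push_cast
          linarith
        exact_mod_cast hreal
      calc 2^M * ∑ j ∈ Finset.range (J+1), n.choose j
          ≤ 2^M * ((J+1) * n.choose J) := Nat.mul_le_mul_left _ hsum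
      _ ≤ 2^M * (2^J * n.choose J) :=
          Nat.mul_le_mul_left _ (Nat.mul_le_mul_right _ hJ2)
      _ = 2^(M+J) * n.choose J := by rw [pow_add, Nat.mul_assoc]
      _ ≤ 2^(100*(R-J)) * n.choose J :=
          Nat.mul_le_mul_right _ (Nat.pow_le_pow_right (by norm_num) hMJ)
      _ = (2^100)^(R-J) * n.choose J := by rw [← pow_mul]
      _ ≤ n.choose (J + (R-J)) := choose_pow_le n (2^100) (R-J) J hKstep
      _ = n.choose R := by rw [Nat.add_sub_cancel' hJR]
    rw [div_eq_mul_inv, mul_comm (((n.choose (n/2) : ℕ) : ℝ))⁻¹ (((n.choose R : ℕ) : ℝ))]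
    exact mul_le_mul_of_nonneg_right (by exact_mod_cast hnat) (inv_nonneg.mpr hCposR.le)
  · have hCR : ((n.choose R : ℕ):ℝ) ≤ (1+t)^n * (1/t)^R := by
      have h := choose_mul_pow_le_real n R hRn t ht0.le
      have htR : (0:ℝ) < t^R := by positivity
      have h2 : ((n.choose R : ℕ):ℝ) ≤ (1+t)^n / t^R := (le_div_iff₀ htR).mpr h
      have h3 : (1+t)^n * (1/t)^R = (1+t)^n / t^R := by
        rw [one_div, inv_pow, div_eq_mul_inv]
      rw [h3]; exact h2
    have hρpow : (1/t)^R ≤ ρ^n := by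
      have hc2 : c^2 ≤ Real.log ρ / (2*Real.log (1/t)) := by
        have hsq : c^2 ≤ cε^2 := by
          apply pow_le_pow_left₀ hc.le hccε
        have := Real.sq_sqrt (show (0:ℝ) ≤ Real.log ρ / (2 * Real.log (1/t)) from div_nonneg hlogρ.le (by linarith))
        linarith [hsq, this]
      have hexp1 : (1/t)^R = Real.exp ((R:ℝ) * Real.log (1/t)) := by
        rw [Real.exp_nat_mul, Real.exp_log (by positivity)]
      have hexp2 : ρ^n = Real.exp ((n:ℝ) * Real.log ρ) := by
        rw [Real.exp_nat_mul, Real.exp_log (by linarith)]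
      rw [hexp1, hexp2]
      apply Real.exp_le_exp.mpr
      have e1 : (R:ℝ) * Real.log (1/t) ≤ (2*c^2*(n:ℝ)) * Real.log (1/t) :=
        mul_le_mul_of_nonneg_right hRr hlogt.le
      have e2 : 2*c^2 * Real.log (1/t) ≤ Real.log ρ := by
        have := (le_div_iff₀ (show (0:ℝ) < 2*Real.log (1/t) by linarith)).mp hc2
        linarith
      calc (R:ℝ) * Real.log (1/t) ≤ (2*c^2*(n:ℝ))*Real.log (1/t) := e1
      _ = (n:ℝ) * (2*c^2*Real.log (1/t)) := by ring
      _ ≤ (n:ℝ) * Real.log ρ := mul_le_mul_of_nonneg_left e2 (Nat.cast_nonneg n)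
    have hσpow : ((n:ℝ)+1) ≤ σ^n := hn₁ n (le_trans (le_max_left _ _) hn)
    have h2n : ((2:ℝ))^n ≤ ((n:ℝ)+1) * ((n.choose (n/2) : ℕ) : ℝ) := by
      exact_mod_cast two_pow_le_mul_choose n
    have hd1 : (1/2 + ε'/4 : ℝ) ≠ 0 := by positivity
    have hd2 : (1/2 + ε'/2 : ℝ) ≠ 0 := by positivity
    have hbase : (1+t)*ρ*σ = 1 + 2*ε' := by
      rw [htdef, hρdef, hσdef]; field_simp; ring
    have hfinal : ((n.choose R:ℕ):ℝ) * ((n:ℝ)+1) ≤ (2:ℝ)^n * (1/2+ε)^n := by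
      calc ((n.choose R:ℕ):ℝ) * ((n:ℝ)+1) ≤ ((1+t)^n * (1/t)^R) * σ^n :=
        mul_le_mul hCR hσpow (by positivity) (by positivity)
      _ ≤ ((1+t)^n * ρ^n) * σ^n := by
        apply mul_le_mul_of_nonneg_right
          (mul_le_mul_of_nonneg_left hρpow (by positivity)) (by positivity)
      _ = ((1+t)*ρ*σ)^n := by rw [mul_pow, mul_pow]
      _ = (1+2*ε')^n := by rw [hbase]
      _ ≤ (1+2*ε)^n := pow_le_pow_left₀ (by linarith) (by linarith) n
      _ = ((2:ℝ)*(1/2+ε))^n := by congr 1; ring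
      _ = (2:ℝ)^n * (1/2+ε)^n := mul_pow 2 _ n
    rw [inv_mul_le_iff₀ hCposR]
    have hpos1 : (0:ℝ) < (n:ℝ)+1 := by positivity
    have step2 : ((n:ℝ)+1) * ((n.choose R:ℕ):ℝ)
        ≤ ((n:ℝ)+1) * (((n.choose (n/2) : ℕ) : ℝ) * (1/2+ε)^n) := by
      calc ((n:ℝ)+1) * ((n.choose R:ℕ):ℝ) = ((n.choose R:ℕ):ℝ) * ((n:ℝ)+1) := mul_comm _ _
      _ ≤ ((2:ℝ)^n) * (1/2+ε)^n := hfinal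
      _ ≤ (((n:ℝ)+1) * ((n.choose (n/2) : ℕ) : ℝ)) * (1/2+ε)^n :=
        mul_le_mul_of_nonneg_right h2n (by positivity)
      _ = ((n:ℝ)+1) * (((n.choose (n/2) : ℕ) : ℝ) * (1/2+ε)^n) := by ring
    exact le_of_mul_le_mul_left step2 hpos1
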